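/- Let k be a field of characteristic p ≠ 2. Every element of {[x₁,x₂]}ᵀ, the T-ideal of k₀⟨X⟩ generated by [x₁,x₂], is congruent modulo T⁽³⁾ to a linear combination of elements of the form w·∏_{r=1}^{s} [x_{j_{2r−1}}, x_{j_{2r}}]·x_{j_{2r−1}}^{β_{2r−1}}·x_{j_{2r}}^{β_{2r}}, where s ≥ 1, j₁ < j₂ < ⋯ < j_{2s}, all β_i ≥ 0, and either w is empty (the term is just the product of commutator factors) or w = ∏_{r=1}^{m} x_{i_r}^{α_r} with i₁ < i₂ < ⋯ < i_m, all α_r > 0, and {i₁,…,i_m} ∩ {j₁,…,j_{2s}} = ∅. -/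

import Mathlib

noncomputable section

/-- The ring commutator `[a,b] = a*b - b*a`. -/
def ringComm {A : Type*} [Ring A] (a b : A) : A := a * b - b * a

variable (k : Type*) [Field k]

/-- The free unitary associative `k`-algebra `k⟨X⟩` on countably many generators. -/
abbrev F : Type _ := FreeAlgebra k ℕ

/-- The generator `x_{i+1}`: we index the variables from `0`, so `X k i` is the
variable `x_{i+1}` of the paper. -/
def X (i : ℕ) : F k := FreeAlgebra.ι k i

/-- `k₀⟨X⟩`, the free nonunitary associative algebra: the non-unital subalgebra of
`k⟨X⟩` generated by the variables, i.e. the polynomials with zero constant term. -/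
def A0 : NonUnitalSubalgebra k (F k) := NonUnitalAlgebra.adjoin k (Set.range (FreeAlgebra.ι k))

/-- `T⁽³⁾`: the two-sided (non-unital) ideal of `k₀⟨X⟩` generated — including the
generators themselves — by all `[[u,v],w]` with `u,v,w ∈ k₀⟨X⟩`. -/
def T3 : Submodule k (F k) := Submodule.span k
  {x | ∃ u ∈ A0 k, ∃ v ∈ A0 k, ∃ w ∈ A0 k,
    x = ringComm (ringComm u v) w ∨
    (∃ a ∈ A0 k, x = a * ringComm (ringComm u v) w) ∨
    (∃ b ∈ A0 k, x = ringComm (ringComm u v) w * b) ∨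
    (∃ a ∈ A0 k, ∃ b ∈ A0 k, x = a * ringComm (ringComm u v) w * b)}

namespace S5

variable {k}

lemma exists_decomp (f : F k) :
    ∃ (c : k) (a : F k), a ∈ A0 k ∧ f = algebraMap k (F k) c + a := by
  induction f using FreeAlgebra.induction with
  | grade0 r => exact ⟨r, 0, (A0 k).zero_mem, by simp⟩
  | grade1 i =>
      refine ⟨0, FreeAlgebra.ι k i, ?_, by simp⟩
      exact NonUnitalAlgebra.subset_adjoin k ⟨i, rfl⟩
  | mul x y hx hy =>
      obtain ⟨c, a, ha, rfl⟩ := hx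
      obtain ⟨d, b, hb, rfl⟩ := hy
      refine ⟨c * d, algebraMap k (F k) c * b + a * algebraMap k (F k) d + a * b, ?_,
        by rw [map_mul]; noncomm_ring⟩
      refine (A0 k).add_mem ((A0 k).add_mem ?_ ?_) ((A0 k).mul_mem ha hb)
      · have : algebraMap k (F k) c * b = c • b := by rw [Algebra.smul_def]
        rw [this]; exact SMulMemClass.smul_mem c hb
      · have : a * algebraMap k (F k) d = d • a := by
          rw [Algebra.smul_def, ← Algebra.commutes]
        rw [this]; exact SMulMemClass.smul_mem d ha
  | add x y hx hy =>
      obtain ⟨c, a, ha, rfl⟩ := hx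
      obtain ⟨d, b, hb, rfl⟩ := hy
      exact ⟨c + d, a + b, (A0 k).add_mem ha hb, by rw [map_add]; abel⟩

lemma mem_T3_gen {u v w : F k} (hu : u ∈ A0 k) (hv : v ∈ A0 k) (hw : w ∈ A0 k) :
    ringComm (ringComm u v) w ∈ T3 k :=
  Submodule.subset_span ⟨u, hu, v, hv, w, hw, Or.inl rfl⟩

lemma T3_mul_left (f : F k) {x : F k} (hx : x ∈ T3 k) : f * x ∈ T3 k := by
  obtain ⟨c, a, ha, rfl⟩ := exists_decomp f
  rw [add_mul]
  refine Submodule.add_mem _ ?_ ?_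
  · rw [← Algebra.smul_def]; exact Submodule.smul_mem _ _ hx
  · refine Submodule.span_induction (p := fun x _ => a * x ∈ T3 k) ?_ (by simp) ?_ ?_ hx
    · rintro x ⟨u, hu, v, hv, w, hw, h | ⟨a', ha', h⟩ | ⟨b, hb, h⟩ | ⟨a', ha', b, hb, h⟩⟩ <;>
        subst h
      · exact Submodule.subset_span ⟨u, hu, v, hv, w, hw, Or.inr (Or.inl ⟨a, ha, rfl⟩)⟩
      · exact Submodule.subset_span ⟨u, hu, v, hv, w, hw,
          Or.inr (Or.inl ⟨a * a', (A0 k).mul_mem ha ha', by noncomm_ring⟩)⟩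
      · exact Submodule.subset_span ⟨u, hu, v, hv, w, hw,
          Or.inr (Or.inr (Or.inr ⟨a, ha, b, hb, by noncomm_ring⟩))⟩
      · exact Submodule.subset_span ⟨u, hu, v, hv, w, hw,
          Or.inr (Or.inr (Or.inr ⟨a * a', (A0 k).mul_mem ha ha', b, hb, by noncomm_ring⟩))⟩
    · intro x y _ _ h1 h2; rw [mul_add]; exact Submodule.add_mem _ h1 h2
    · intro c x _ h; rw [mul_smul_comm]; exact Submodule.smul_mem _ _ h

lemma T3_mul_right (f : F k) {x : F k} (hx : x ∈ T3 k) : x * f ∈ T3 k := by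
  obtain ⟨c, a, ha, rfl⟩ := exists_decomp f
  rw [mul_add]
  refine Submodule.add_mem _ ?_ ?_
  · rw [← Algebra.commutes, ← Algebra.smul_def]; exact Submodule.smul_mem _ _ hx
  · refine Submodule.span_induction (p := fun x _ => x * a ∈ T3 k) ?_ (by simp) ?_ ?_ hx
    · rintro x ⟨u, hu, v, hv, w, hw, h | ⟨a', ha', h⟩ | ⟨b, hb, h⟩ | ⟨a', ha', b, hb, h⟩⟩ <;>
        subst h
      · exact Submodule.subset_span ⟨u, hu, v, hv, w, hw, Or.inr (Or.inr (Or.inl ⟨a, ha, rfl⟩))⟩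
      · exact Submodule.subset_span ⟨u, hu, v, hv, w, hw,
          Or.inr (Or.inr (Or.inr ⟨a', ha', a, ha, rfl⟩))⟩
      · exact Submodule.subset_span ⟨u, hu, v, hv, w, hw,
          Or.inr (Or.inr (Or.inl ⟨b * a, (A0 k).mul_mem hb ha, by noncomm_ring⟩))⟩
      · exact Submodule.subset_span ⟨u, hu, v, hv, w, hw,
          Or.inr (Or.inr (Or.inr ⟨a', ha', b * a, (A0 k).mul_mem hb ha, by noncomm_ring⟩))⟩
    · intro x y _ _ h1 h2; rw [add_mul]; exact Submodule.add_mem _ h1 h2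
    · intro c x _ h; rw [smul_mul_assoc]; exact Submodule.smul_mem _ _ h

lemma ringComm_add_left {A : Type*} [Ring A] (a b c : A) :
    ringComm (a + b) c = ringComm a c + ringComm b c := by
  simp only [ringComm]; noncomm_ring

lemma ringComm_add_right {A : Type*} [Ring A] (a b c : A) :
    ringComm a (b + c) = ringComm a b + ringComm a c := by
  simp only [ringComm]; noncomm_ring

lemma ringComm_algebraMap_left (c : k) (v : F k) : ringComm (algebraMap k (F k) c) v = 0 := by
  simp [ringComm, Algebra.commutes]

lemma ringComm_algebraMap_right (c : k) (v : F k) : ringComm v (algebraMap k (F k) c) = 0 := by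
  simp [ringComm, Algebra.commutes]

lemma t3_comm3 (u v w : F k) : ringComm (ringComm u v) w ∈ T3 k := by
  obtain ⟨cu, a, ha, rfl⟩ := exists_decomp u
  obtain ⟨cv, b, hb, rfl⟩ := exists_decomp v
  obtain ⟨cw, c, hc, rfl⟩ := exists_decomp w
  have h1 : ringComm (algebraMap k (F k) cu + a) (algebraMap k (F k) cv + b) = ringComm a b := by
    simp [ringComm_add_left, ringComm_add_right, ringComm_algebraMap_left,
      ringComm_algebraMap_right]
  rw [h1]
  simpa [ringComm_add_right, ringComm_algebraMap_right] using mem_T3_gen ha hb hc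

/-- `f` commutes with any commutator, modulo `T3`. -/
lemma t3_central (u v f : F k) : f * ringComm u v - ringComm u v * f ∈ T3 k := by
  have h : f * ringComm u v - ringComm u v * f = -(ringComm (ringComm u v) f) := by
    simp only [ringComm]; abel
  rw [h]; exact Submodule.neg_mem _ (t3_comm3 u v f)

/-- Key identity: `[a,b][c,d] + [b,d][a,c] ∈ T3`. -/
lemma t3_E2 (a b c d : F k) :
    ringComm a b * ringComm c d + ringComm b d * ringComm a c ∈ T3 k := by
  have key : ringComm a b * ringComm c d + ringComm b d * ringComm a c =
      ringComm (ringComm a (b * c)) d - b * ringComm (ringComm a c) d -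
        ringComm (ringComm a b) d * c := by
    simp only [ringComm]; noncomm_ring
  rw [key]
  exact Submodule.sub_mem _ (Submodule.sub_mem _ (t3_comm3 _ _ _)
    (T3_mul_left _ (t3_comm3 _ _ _))) (T3_mul_right _ (t3_comm3 _ _ _))


variable (k)

/-- The word `x_{i₁} ⋯ x_{i_n}`. -/
def WW (l : List ℕ) : F k := (l.map (X k)).prod

/-- A single-variable commutator `[x_i, x_j]`. -/
def CC (p : ℕ × ℕ) : F k := ringComm (X k p.1) (X k p.2)

/-- A product of single-variable commutators. -/
def CP (cs : List (ℕ × ℕ)) : F k := (cs.map (CC k)).prod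

/-- The flattened index list of a list of pairs. -/
def FI (cs : List (ℕ × ℕ)) : List ℕ := cs.flatMap (fun p => [p.1, p.2])

variable {k}

@[simp] lemma WW_nil : WW k [] = 1 := rfl
@[simp] lemma WW_cons (i : ℕ) (l : List ℕ) : WW k (i :: l) = X k i * WW k l := by
  simp [WW]
lemma WW_append (l l' : List ℕ) : WW k (l ++ l') = WW k l * WW k l' := by
  simp [WW]
@[simp] lemma CP_nil : CP k [] = 1 := rfl
@[simp] lemma CP_cons (p : ℕ × ℕ) (t : List (ℕ × ℕ)) :
    CP k (p :: t) = CC k p * CP k t := by simp [CP]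
@[simp] lemma FI_nil : FI [] = [] := rfl
@[simp] lemma FI_cons (p : ℕ × ℕ) (t : List (ℕ × ℕ)) :
    FI (p :: t) = p.1 :: p.2 :: FI t := rfl

lemma FI_perm {cs cs' : List (ℕ × ℕ)} (h : cs.Perm cs') : (FI cs).Perm (FI cs') :=
  h.flatMap_right _

lemma mem_FI {i : ℕ} {cs : List (ℕ × ℕ)} :
    i ∈ FI cs ↔ ∃ p ∈ cs, i = p.1 ∨ i = p.2 := by
  simp only [FI, List.mem_flatMap, List.mem_cons, List.mem_singleton]
  aesop

lemma CC_swap (i j : ℕ) : CC k (j, i) = -CC k (i, j) := by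
  simp only [CC, ringComm]; abel

lemma CC_self {p : ℕ × ℕ} (h : p.1 = p.2) : CC k p = 0 := by
  simp [CC, ringComm, h]

/-- congruence relation modulo `T3`, up to sign. -/
def PM (x y : F k) : Prop := x - y ∈ T3 k ∨ x + y ∈ T3 k

lemma pm_refl (x : F k) : PM x x := Or.inl (by simp)

lemma pm_of_sub {x y : F k} (h : x - y ∈ T3 k) : PM x y := Or.inl h

lemma pm_of_eq {x y : F k} (h : x = y) : PM x y := pm_of_sub (by simp [h])

lemma pm_trans {x y z : F k} (h1 : PM x y) (h2 : PM y z) : PM x z := by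
  rcases h1 with h1 | h1 <;> rcases h2 with h2 | h2
  · exact Or.inl (by have h3 : x - z = (x - y) + (y - z) := by abel
                     rw [h3]; exact Submodule.add_mem _ h1 h2)
  · exact Or.inr (by have h3 : x + z = (x - y) + (y + z) := by abel
                     rw [h3]; exact Submodule.add_mem _ h1 h2)
  · exact Or.inr (by have h3 : x + z = (x + y) - (y - z) := by abel
                     rw [h3]; exact Submodule.sub_mem _ h1 h2)
  · exact Or.inl (by have h3 : x - z = (x + y) - (y + z) := by abel
                     rw [h3]; exact Submodule.sub_mem _ h1 h2)

lemma pm_neg_right {x y : F k} (h : PM x y) : PM x (-y) := by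
  rcases h with h | h
  · exact Or.inr (by rw [← sub_eq_add_neg]; exact h)
  · exact Or.inl (by simpa using h)

lemma pm_mul_left {x y : F k} (c : F k) (h : PM x y) : PM (c * x) (c * y) := by
  rcases h with h | h
  · exact Or.inl (by rw [← mul_sub]; exact T3_mul_left c h)
  · exact Or.inr (by rw [← mul_add]; exact T3_mul_left c h)

lemma pm_mul_right {x y : F k} (c : F k) (h : PM x y) : PM (x * c) (y * c) := by
  rcases h with h | h
  · exact Or.inl (by rw [← sub_mul]; exact T3_mul_right c h)
  · exact Or.inr (by rw [← add_mul]; exact T3_mul_right c h)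

lemma pm_mem {N : Submodule k (F k)} (hT : T3 k ≤ N) {x y : F k}
    (h : PM x y) (hy : y ∈ N) : x ∈ N := by
  rcases h with h | h
  · have : x = (x - y) + y := by abel
    rw [this]; exact Submodule.add_mem _ (hT h) hy
  · have : x = (x + y) - y := by abel
    rw [this]; exact Submodule.sub_mem _ (hT h) hy

lemma t3_CP_perm {cs cs' : List (ℕ × ℕ)} (h : cs.Perm cs') : CP k cs - CP k cs' ∈ T3 k := by
  induction h with
  | nil => simp
  | cons p h ih =>
      rw [CP_cons, CP_cons, ← mul_sub]
      exact T3_mul_left _ ih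
  | swap p q l =>
      have h1 : CP k (q :: p :: l) - CP k (p :: q :: l)
          = ringComm (CC k q) (CC k p) * CP k l := by
        simp only [CP_cons, ringComm]; noncomm_ring
      rw [h1]
      exact T3_mul_right _ (t3_comm3 _ _ _)
  | trans h1 h2 ih1 ih2 =>
      have := Submodule.add_mem _ ih1 ih2
      simpa using this

lemma pm_CP_perm {cs cs' : List (ℕ × ℕ)} (h : cs.Perm cs') : PM (CP k cs) (CP k cs') :=
  pm_of_sub (t3_CP_perm h)

lemma pm_orient {q : ℕ × ℕ} {i j : ℕ} (t : List (ℕ × ℕ)) (h : q = (i, j) ∨ q = (j, i)) :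
    PM (CP k (q :: t)) (CP k ((i, j) :: t)) := by
  rcases h with rfl | rfl
  · exact pm_refl _
  · refine Or.inr ?_
    have : CP k ((j, i) :: t) + CP k ((i, j) :: t) = 0 := by
      simp only [CP_cons, CC_swap i j, neg_mul]
      exact neg_add_cancel _
    rw [this]; exact Submodule.zero_mem _

/-- two single commutators sharing an index multiply into `T3`. -/
lemma t3_shared {p q : ℕ × ℕ}
    (h : p.1 = q.1 ∨ p.1 = q.2 ∨ p.2 = q.1 ∨ p.2 = q.2) : CC k p * CC k q ∈ T3 k := by
  obtain ⟨a, b⟩ := p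
  obtain ⟨c, d⟩ := q
  have base : ∀ i j l : ℕ, CC k (i, j) * CC k (i, l) ∈ T3 k := by
    intro i j l
    have := t3_E2 (X k i) (X k j) (X k i) (X k l)
    have h0 : ringComm (X k j) (X k l) * ringComm (X k i) (X k i) = 0 := by
      simp [ringComm]
    rw [h0, add_zero] at this
    exact this
  simp only at h
  rcases h with h | h | h | h
  · subst h; exact base a b d
  · subst h
    have : CC k (a, b) * CC k (c, a) = -(CC k (a, b) * CC k (a, c)) := by
      rw [CC_swap a c, mul_neg]
    rw [this]; exact Submodule.neg_mem _ (base a b c)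
  · subst h
    have : CC k (a, b) * CC k (b, d) = -(CC k (b, a) * CC k (b, d)) := by
      rw [CC_swap b a, neg_mul]
    rw [this]; exact Submodule.neg_mem _ (base b a d)
  · subst h
    have : CC k (a, b) * CC k (c, b) = CC k (b, a) * CC k (b, c) := by
      rw [CC_swap b a, CC_swap b c, neg_mul_neg]
    rw [this]; exact base b a c

/-- if the head pair shares an index with some later pair, the product is in `T3`. -/
lemma t3_head_shared (p : ℕ × ℕ) (t : List (ℕ × ℕ)) (i : ℕ)
    (hi : i = p.1 ∨ i = p.2) (hmem : i ∈ FI t) : CP k (p :: t) ∈ T3 k := by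
  obtain ⟨q, hq, hq'⟩ := mem_FI.mp hmem
  obtain ⟨t1, t2, rfl⟩ := List.append_of_mem hq
  have hperm : (p :: (t1 ++ q :: t2)).Perm (p :: q :: (t1 ++ t2)) :=
    List.Perm.cons p List.perm_middle
  have hd := t3_CP_perm (k := k) hperm
  have hmem2 : CP k (p :: q :: (t1 ++ t2)) ∈ T3 k := by
    have hsh : CC k p * CC k q ∈ T3 k := by
      apply t3_shared
      rcases hi with rfl | rfl <;> rcases hq' with h | h <;> tauto
    have : CP k (p :: q :: (t1 ++ t2)) = (CC k p * CC k q) * CP k (t1 ++ t2) := by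
      simp [mul_assoc]
    rw [this]; exact T3_mul_right _ hsh
  have : CP k (p :: (t1 ++ q :: t2)) =
      (CP k (p :: (t1 ++ q :: t2)) - CP k (p :: q :: (t1 ++ t2))) +
        CP k (p :: q :: (t1 ++ t2)) := by abel
  rw [this]; exact Submodule.add_mem _ hd hmem2

/-- duplicate index anywhere makes the commutator product lie in `T3`. -/
lemma t3_dup : ∀ cs : List (ℕ × ℕ), ¬ (FI cs).Nodup → CP k cs ∈ T3 k := by
  intro cs
  induction cs with
  | nil => intro h; exact absurd List.nodup_nil h
  | cons p t ih =>
      intro h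
      by_cases h12 : p.1 = p.2
      · rw [CP_cons, CC_self h12, zero_mul]; exact Submodule.zero_mem _
      by_cases h1 : p.1 ∈ FI t
      · exact t3_head_shared p t p.1 (Or.inl rfl) h1
      by_cases h2 : p.2 ∈ FI t
      · exact t3_head_shared p t p.2 (Or.inr rfl) h2
      · have hnd : ¬ (FI t).Nodup := by
          intro hnd
          apply h
          rw [FI_cons]
          refine List.Nodup.cons ?_ (List.Nodup.cons h2 hnd)
          simp only [List.mem_cons]
          rintro (h | h)
          · exact h12 h
          · exact h1 h
        rw [CP_cons]
        exact T3_mul_left _ (ih hnd)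

lemma exists_min : ∀ (l : List ℕ), l ≠ [] → ∃ m ∈ l, ∀ x ∈ l, m ≤ x := by
  intro l
  induction l with
  | nil => intro h; exact absurd rfl h
  | cons a t ih =>
      intro _
      rcases eq_or_ne t [] with rfl | ht
      · exact ⟨a, List.mem_cons_self, by simp⟩
      · obtain ⟨m, hm, hall⟩ := ih ht
        rcases le_total a m with hle | hle
        · refine ⟨a, List.mem_cons_self, ?_⟩
          intro x hx
          rcases List.mem_cons.mp hx with rfl | hx
          · exact le_refl x
          · exact le_trans hle (hall x hx)
        · refine ⟨m, List.mem_cons_of_mem a hm, ?_⟩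
          intro x hx
          rcases List.mem_cons.mp hx with rfl | hx
          · exact hle
          · exact hall x hx


variable (k)

def Good (cs : List (ℕ × ℕ)) : Prop := cs ≠ [] ∧ List.Chain' (· < ·) (FI cs)

def NSet (l0 : List ℕ) : Set (F k) := {x | ∃ ds, Good ds ∧ (FI ds).Perm l0 ∧ x = CP k ds}

def NN (l0 : List ℕ) : Submodule k (F k) := Submodule.span k (NSet k l0) ⊔ T3 k

variable {k}

lemma NN_congr {l0 l1 : List ℕ} (h : l0.Perm l1) : NN k l0 = NN k l1 := by
  have : NSet k l0 = NSet k l1 := by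
    ext x
    constructor
    · rintro ⟨ds, hg, hp, rfl⟩; exact ⟨ds, hg, hp.trans h, rfl⟩
    · rintro ⟨ds, hg, hp, rfl⟩; exact ⟨ds, hg, hp.trans h.symm, rfl⟩
  rw [NN, NN, this]

lemma T3_le_NN (l0 : List ℕ) : T3 k ≤ NN k l0 := le_sup_right

lemma pm_congr {x y x' y' : F k} (h1 : x = x') (h2 : y = y') (h : PM x' y') : PM x y := by
  rw [h1, h2]; exact h

lemma prepend_mem {m0 m1 : ℕ} (h01 : m0 < m1) {l0 : List ℕ}
    (hlb : ∀ i ∈ l0, m1 < i) {y : F k} (hy : y ∈ NN k l0) :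
    CC k (m0, m1) * y ∈ NN k (m0 :: m1 :: l0) := by
  obtain ⟨s, hs, t, ht, rfl⟩ := Submodule.mem_sup.mp hy
  rw [mul_add]
  refine Submodule.add_mem _ ?_ (Submodule.mem_sup_right (T3_mul_left _ ht))
  refine Submodule.mem_sup_left ?_
  refine Submodule.span_induction
    (p := fun x _ => CC k (m0, m1) * x ∈ Submodule.span k (NSet k (m0 :: m1 :: l0)))
    ?_ (by show CC k (m0, m1) * 0 ∈ _; rw [mul_zero]; exact Submodule.zero_mem _) ?_ ?_ hs
  · rintro x ⟨ds, ⟨hne, hch⟩, hperm, rfl⟩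
    refine Submodule.subset_span ⟨(m0, m1) :: ds, ⟨List.cons_ne_nil _ _, ?_⟩,
      ?_, by rw [CP_cons]⟩
    · rw [FI_cons]
      have h2 : List.Chain' (· < ·) (m1 :: FI ds) := by
        refine List.isChain_cons.mpr ⟨?_, hch⟩
        intro y hy
        exact hlb y (hperm.subset (List.mem_of_mem_head? hy))
      refine List.isChain_cons.mpr ⟨?_, h2⟩
      intro y hy
      simp only [List.head?_cons, Option.mem_some_iff] at hy
      subst hy; exact h01
    · rw [FI_cons]
      exact (hperm.cons m1).cons m0
  · intro x y _ _ h1 h2; rw [mul_add]; exact Submodule.add_mem _ h1 h2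
  · intro c x _ h; rw [mul_smul_comm]; exact Submodule.smul_mem _ _ h

lemma norm : ∀ (n : ℕ) (cs : List (ℕ × ℕ)), cs.length ≤ n → cs ≠ [] → (FI cs).Nodup →
    CP k cs ∈ NN k (FI cs) := by
  intro n
  induction n with
  | zero =>
      intro cs h hne _
      cases cs with
      | nil => exact absurd rfl hne
      | cons p t => simp at h
  | succ n IH =>
      rintro cs hlen hne hnd
      have hFIne : FI cs ≠ [] := by
        cases cs with
        | nil => exact absurd rfl hne
        | cons p t => simp [FI_cons]
      obtain ⟨m0, hm0mem, hm0min⟩ := exists_min (FI cs) hFIne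
      obtain ⟨p, hp, hpi⟩ := mem_FI.mp hm0mem
      obtain ⟨t1, t2, hcs⟩ := List.append_of_mem hp
      subst hcs
      set cs₁ := t1 ++ t2 with hcs₁
      have hperm : (t1 ++ p :: t2).Perm (p :: cs₁) := List.perm_middle
      set b := if m0 = p.1 then p.2 else p.1 with hb
      have horient : p = (m0, b) ∨ p = (b, m0) := by
        by_cases h : m0 = p.1
        · left; rw [Prod.ext_iff]; constructor
          · exact h.symm
          · simp [hb, h]
        · right; rw [Prod.ext_iff]; constructor
          · simp [hb, h]
          · rcases hpi with h' | h'
            · exact absurd h' h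
            · exact h'.symm
      have hpm : PM (CP k (t1 ++ p :: t2)) (CP k ((m0, b) :: cs₁)) :=
        pm_trans (pm_CP_perm hperm) (pm_orient cs₁ horient)
      have hFIp : (FI (p :: cs₁)).Perm (FI (t1 ++ p :: t2)) := FI_perm hperm.symm
      have hFI : (m0 :: b :: FI cs₁).Perm (FI (t1 ++ p :: t2)) := by
        refine List.Perm.trans ?_ hFIp
        rcases horient with h | h
        · rw [h]; exact List.Perm.refl _
        · rw [h]; exact List.Perm.swap b m0 (FI cs₁)
      have hnd' : (m0 :: b :: FI cs₁).Nodup := hFI.nodup_iff.mpr hnd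
      have hm0nb : m0 ≠ b := by
        intro h; rw [h] at hnd'; exact (List.nodup_cons.mp hnd').1 (List.mem_cons_self)
      have hm0nFI : m0 ∉ FI cs₁ := fun h =>
        (List.nodup_cons.mp hnd').1 (List.mem_cons_of_mem _ h)
      have hbnFI : b ∉ FI cs₁ := (List.nodup_cons.mp (List.nodup_cons.mp hnd').2).1
      have hm0b : m0 < b := by
        refine lt_of_le_of_ne (hm0min b ?_) hm0nb
        exact hFI.subset (List.mem_cons_of_mem _ (List.mem_cons_self))
      -- reduce goal
      rw [← NN_congr hFI]
      refine pm_mem (T3_le_NN _) hpm ?_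
      rcases eq_or_ne cs₁ [] with hcs1nil | hcs1ne
      · rw [hcs1nil]
        refine Submodule.mem_sup_left (Submodule.subset_span
          ⟨[(m0, b)], ⟨List.cons_ne_nil _ _, ?_⟩, List.Perm.refl _, rfl⟩)
        simp [FI_cons, List.Chain', List.isChain_pair, hm0b]
      · obtain ⟨q0, t0, hq0⟩ := List.exists_cons_of_ne_nil hcs1ne
        obtain ⟨m1, hm1mem, hm1min⟩ := exists_min (b :: FI cs₁) (List.cons_ne_nil _ _)
        rcases eq_or_ne m1 b with hm1b | hm1b
        · -- b is the second smallest: recurse directly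
          have hbound : ∀ i ∈ FI cs₁, b < i := by
            intro i hi
            have h2 := hm1min i (List.mem_cons_of_mem _ hi)
            rw [hm1b] at h2
            refine lt_of_le_of_ne h2 ?_
            intro h; apply hbnFI; rw [h]; exact hi
          have hlen1 : cs₁.length ≤ n := by
            have h3 : (t1 ++ p :: t2).length = cs₁.length + 1 := by
              simp [hcs₁]; omega
            omega
          have h1 := IH cs₁ hlen1 hcs1ne (List.nodup_cons.mp (List.nodup_cons.mp hnd').2).2
          have := prepend_mem hm0b hbound h1
          rw [CP_cons]
          exact this
        · -- pair m0 with m1, pushing b into a later pair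
          have hm1FI : m1 ∈ FI cs₁ := by
            rcases List.mem_cons.mp hm1mem with h | h
            · exact absurd h hm1b
            · exact h
          have hm1ltb : m1 < b :=
            lt_of_le_of_ne (hm1min b (List.mem_cons_self)) hm1b
          have hm0m1 : m0 < m1 := by
            refine lt_of_le_of_ne (hm0min m1 (hFI.subset
              (List.mem_cons_of_mem _ (List.mem_cons_of_mem _ hm1FI)))) ?_
            intro h; rw [← h] at hm1FI; exact hm0nFI hm1FI
          obtain ⟨q, hq, hqi⟩ := mem_FI.mp hm1FI
          obtain ⟨s1, s2, hcs12⟩ := List.append_of_mem hq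
          set cs₂ := s1 ++ s2 with hcs₂
          have hperm2 : cs₁.Perm (q :: cs₂) := by rw [hcs12]; exact List.perm_middle
          set d := if m1 = q.2 then q.1 else q.2 with hd
          have horient2 : q = (d, m1) ∨ q = (m1, d) := by
            by_cases h : m1 = q.2
            · left; rw [Prod.ext_iff]; constructor
              · simp [hd, h]
              · exact h.symm
            · right; rw [Prod.ext_iff]; constructor
              · rcases hqi with h' | h'
                · exact h'.symm
                · exact absurd h' h
              · simp [hd, h]
          -- facts about the index lists
          have hFIq : (FI cs₁).Perm (q.1 :: q.2 :: FI cs₂) := by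
            have := FI_perm hperm2; rwa [FI_cons] at this
          have hndq : (q.1 :: q.2 :: FI cs₂).Nodup :=
            hFIq.nodup_iff.mp (List.nodup_cons.mp (List.nodup_cons.mp hnd').2).2
          have hqm1d : (FI cs₁).Perm (m1 :: d :: FI cs₂) := by
            refine hFIq.trans ?_
            rcases horient2 with h | h
            · rw [h]; exact List.Perm.swap m1 d (FI cs₂)
            · rw [h]
          have hndm1d : (m1 :: d :: FI cs₂).Nodup := hqm1d.nodup_iff.mp
            (List.nodup_cons.mp (List.nodup_cons.mp hnd').2).2
          have hdm1 : d ≠ m1 := by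
            intro h
            rw [h] at hndm1d
            exact (List.nodup_cons.mp hndm1d).1 (List.mem_cons_self)
          have hm1nFI2 : m1 ∉ FI cs₂ := fun h =>
            (List.nodup_cons.mp hndm1d).1 (List.mem_cons_of_mem _ h)
          have hdnFI2 : d ∉ FI cs₂ := (List.nodup_cons.mp (List.nodup_cons.mp hndm1d).2).1
          have hdFI1 : d ∈ FI cs₁ := hqm1d.symm.subset
            (List.mem_cons_of_mem _ (List.mem_cons_self))
          have hbd : b ≠ d := by
            intro h; rw [h] at hbnFI; exact hbnFI hdFI1
          have hbnFI2 : b ∉ FI cs₂ := by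
            intro h
            exact hbnFI (hqm1d.symm.subset
              (List.mem_cons_of_mem _ (List.mem_cons_of_mem _ h)))
          -- the PM chain
          have hpm1 : PM (CP k ((m0, b) :: cs₁)) (CP k ((m0, b) :: q :: cs₂)) :=
            pm_CP_perm (hperm2.cons (m0, b))
          have hpm2 : PM (CP k ((m0, b) :: q :: cs₂)) (CP k ((m0, b) :: (d, m1) :: cs₂)) := by
            refine pm_congr (CP_cons _ _) (CP_cons _ _) ?_
            exact pm_mul_left _ (pm_orient cs₂ horient2)
          have hstep : CP k ((m0, b) :: (d, m1) :: cs₂) - CP k ((m0, m1) :: (b, d) :: cs₂)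
              ∈ T3 k := by
            have hcore : CC k (m0, b) * CC k (d, m1) - CC k (m0, m1) * CC k (b, d) ∈ T3 k := by
              have hE := t3_E2 (X k b) (X k m0) (X k d) (X k m1)
              have heq : CC k (m0, b) * CC k (d, m1) - CC k (m0, m1) * CC k (b, d) =
                  -(ringComm (X k b) (X k m0) * ringComm (X k d) (X k m1) +
                    ringComm (X k m0) (X k m1) * ringComm (X k b) (X k d)) := by
                have h1 : ringComm (X k b) (X k m0) = -CC k (m0, b) := CC_swap m0 b
                rw [h1]
                show CC k (m0, b) * CC k (d, m1) - CC k (m0, m1) * CC k (b, d) =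
                  -(-CC k (m0, b) * CC k (d, m1) + CC k (m0, m1) * CC k (b, d))
                noncomm_ring
              rw [heq]
              exact Submodule.neg_mem _ hE
            have heq2 : CP k ((m0, b) :: (d, m1) :: cs₂) - CP k ((m0, m1) :: (b, d) :: cs₂) =
                (CC k (m0, b) * CC k (d, m1) - CC k (m0, m1) * CC k (b, d)) * CP k cs₂ := by
              simp only [CP_cons]; noncomm_ring
            rw [heq2]
            exact T3_mul_right _ hcore
          have hpmall : PM (CP k ((m0, b) :: cs₁)) (CP k ((m0, m1) :: (b, d) :: cs₂)) :=
            pm_trans (pm_trans hpm1 hpm2) (pm_of_sub hstep)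
          -- recurse on (b, d) :: cs₂
          have hbound2 : ∀ i ∈ FI ((b, d) :: cs₂), m1 < i := by
            intro i hi
            rw [FI_cons] at hi
            rcases List.mem_cons.mp hi with rfl | hi
            · exact hm1ltb
            rcases List.mem_cons.mp hi with rfl | hi
            · exact lt_of_le_of_ne (hm1min _ (List.mem_cons_of_mem _ hdFI1)) (Ne.symm hdm1)
            · refine lt_of_le_of_ne (hm1min _ (List.mem_cons_of_mem _
                (hqm1d.symm.subset (List.mem_cons_of_mem _ (List.mem_cons_of_mem _ hi))))) ?_
              intro h; rw [← h] at hi; exact hm1nFI2 hi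
          have hnd2 : (FI ((b, d) :: cs₂)).Nodup := by
            rw [FI_cons]
            refine List.Nodup.cons ?_ (List.Nodup.cons hdnFI2
              (List.nodup_cons.mp (List.nodup_cons.mp hndm1d).2).2)
            simp only [List.mem_cons]
            rintro (h | h)
            · exact hbd h
            · exact hbnFI2 h
          have hlen2 : ((b, d) :: cs₂).length ≤ n := by
            have h3 : (t1 ++ p :: t2).length = cs₁.length + 1 := by simp [hcs₁]; omega
            have h4 : cs₁.length = cs₂.length + 1 := by
              rw [hcs12]; simp [hcs₂]; omega
            simp only [List.length_cons]
            omega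
          have h1 := IH ((b, d) :: cs₂) hlen2 (List.cons_ne_nil _ _) hnd2
          have h2 := prepend_mem hm0m1 hbound2 h1
          -- transport back
          have hNNeq : NN k (m0 :: b :: FI cs₁) =
              NN k (m0 :: m1 :: FI ((b, d) :: cs₂)) := by
            refine NN_congr ?_
            rw [FI_cons]
            refine List.Perm.trans (List.Perm.cons m0 ((hqm1d).cons b)) ?_
            exact (List.Perm.swap m1 b (d :: FI cs₂)).cons m0
          rw [hNNeq]
          refine pm_mem (T3_le_NN _) hpmall ?_
          rw [CP_cons]
          exact h2


variable (k)

/-- span of shorter-word commutator terms. -/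
def SM (n : ℕ) : Submodule k (F k) :=
  Submodule.span k {x | ∃ (m : List ℕ) (ds : List (ℕ × ℕ)),
    ds ≠ [] ∧ m.length < n ∧ x = WW k m * CP k ds} ⊔ T3 k

variable {k}

lemma X_mul_SM {i : ℕ} {n : ℕ} {v : F k} (hv : v ∈ SM k n) : X k i * v ∈ SM k (n + 1) := by
  obtain ⟨s, hs, t, ht, rfl⟩ := Submodule.mem_sup.mp hv
  rw [mul_add]
  refine Submodule.add_mem _ ?_ (Submodule.mem_sup_right (T3_mul_left _ ht))
  refine Submodule.mem_sup_left ?_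
  refine Submodule.span_induction (p := fun x _ => X k i * x ∈ Submodule.span k _)
    ?_ (by show X k i * 0 ∈ _; rw [mul_zero]; exact Submodule.zero_mem _) ?_ ?_ hs
  · rintro x ⟨m, ds, hne, hlt, rfl⟩
    refine Submodule.subset_span ⟨i :: m, ds, hne, ?_, ?_⟩
    · simp only [List.length_cons]; omega
    · rw [WW_cons, mul_assoc]
  · intro x y _ _ h1 h2; rw [mul_add]; exact Submodule.add_mem _ h1 h2
  · intro c x _ h; rw [mul_smul_comm]; exact Submodule.smul_mem _ _ h

lemma reord {l l' : List ℕ} (h : l.Perm l') (cs : List (ℕ × ℕ)) :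
    WW k l * CP k cs - WW k l' * CP k cs ∈ SM k l.length := by
  induction h with
  | nil => simp
  | @cons x l₁ l₂ h ih =>
      simp only [WW_cons, List.length_cons, mul_assoc, ← mul_sub]
      exact X_mul_SM ih
  | @swap x y l =>
      have heq : WW k (y :: x :: l) * CP k cs - WW k (x :: y :: l) * CP k cs
          = CC k (y, x) * (WW k l * CP k cs) := by
        simp only [WW_cons, CC, ringComm]; noncomm_ring
      rw [heq]
      have h2 : CC k (y, x) * (WW k l * CP k cs) - WW k l * CP k ((y, x) :: cs) ∈ T3 k := by
        have h3 : CC k (y, x) * (WW k l * CP k cs) - WW k l * CP k ((y, x) :: cs)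
            = (CC k (y, x) * WW k l - WW k l * CC k (y, x)) * CP k cs := by
          rw [CP_cons]; noncomm_ring
        rw [h3]
        refine T3_mul_right _ ?_
        have h4 : CC k (y, x) * WW k l - WW k l * CC k (y, x)
            = -(WW k l * ringComm (X k y) (X k x) - ringComm (X k y) (X k x) * WW k l) := by
          show CC k (y, x) * WW k l - WW k l * CC k (y, x) =
            -(WW k l * CC k (y, x) - CC k (y, x) * WW k l)
          noncomm_ring
        rw [h4]
        exact Submodule.neg_mem _ (t3_central _ _ _)
      have h3 : WW k l * CP k ((y, x) :: cs) ∈ SM k (y :: x :: l).length := by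
        refine Submodule.mem_sup_left (Submodule.subset_span
          ⟨l, (y, x) :: cs, List.cons_ne_nil _ _, ?_, rfl⟩)
        simp only [List.length_cons]; omega
      have h4 : CC k (y, x) * (WW k l * CP k cs) =
          (CC k (y, x) * (WW k l * CP k cs) - WW k l * CP k ((y, x) :: cs)) +
            WW k l * CP k ((y, x) :: cs) := by abel
      rw [h4]
      exact Submodule.add_mem _ (Submodule.mem_sup_right h2) h3
  | @trans l₁ l₂ l₃ h1 h2 ih1 ih2 =>
      have h4 : WW k l₁ * CP k cs - WW k l₃ * CP k cs =
          (WW k l₁ * CP k cs - WW k l₂ * CP k cs) +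
            (WW k l₂ * CP k cs - WW k l₃ * CP k cs) := by abel
      rw [h4]
      exact Submodule.add_mem _ ih1 (h1.length_eq ▸ ih2)

/-- `f` commutes with products of commutators modulo `T3`. -/
lemma t3_CP_central (cs : List (ℕ × ℕ)) (f : F k) :
    f * CP k cs - CP k cs * f ∈ T3 k := by
  induction cs with
  | nil => simp
  | cons p t ih =>
      have heq : f * CP k (p :: t) - CP k (p :: t) * f =
          (f * CC k p - CC k p * f) * CP k t + CC k p * (f * CP k t - CP k t * f) := by
        simp only [CP_cons]; noncomm_ring
      rw [heq]
      exact Submodule.add_mem _ (T3_mul_right _ (t3_central _ _ _)) (T3_mul_left _ ih)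

/-! ### grouping a sorted word -/

def insertG (a : ℕ) : List (ℕ × ℕ) → List (ℕ × ℕ)
  | [] => [(a, 1)]
  | (b, e) :: r => if a = b then (b, e + 1) :: r else (a, 1) :: (b, e) :: r

@[simp] lemma insertG_nil (a : ℕ) : insertG a [] = [(a, 1)] := rfl
lemma insertG_cons (a b e : ℕ) (r : List (ℕ × ℕ)) :
    insertG a ((b, e) :: r) = if a = b then (b, e + 1) :: r else (a, 1) :: (b, e) :: r := rfl

def group : List ℕ → List (ℕ × ℕ)
  | [] => []
  | a :: t => insertG a (group t)

def lettersOf (gs : List (ℕ × ℕ)) : List ℕ := gs.flatMap (fun q => List.replicate q.2 q.1)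

def expOf : List (ℕ × ℕ) → ℕ → ℕ
  | [], _ => 0
  | q :: t, a => if q.1 = a then q.2 else expOf t a

@[simp] lemma lettersOf_nil : lettersOf [] = [] := rfl
@[simp] lemma lettersOf_cons (q : ℕ × ℕ) (t : List (ℕ × ℕ)) :
    lettersOf (q :: t) = List.replicate q.2 q.1 ++ lettersOf t := rfl

lemma group_ne_nil (a : ℕ) (t : List ℕ) : group (a :: t) ≠ [] := by
  show insertG a (group t) ≠ []
  cases h : group t with
  | nil => simp [insertG]
  | cons q r =>
      obtain ⟨b, e⟩ := q
      by_cases hab : a = b <;> simp [insertG, hab]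

lemma lettersOf_group : ∀ l : List ℕ, lettersOf (group l) = l := by
  intro l
  induction l with
  | nil => rfl
  | cons a t ih =>
      show lettersOf (insertG a (group t)) = a :: t
      cases h : group t with
      | nil =>
          have ht : t = [] := by
            cases t with
            | nil => rfl
            | cons c t' => exact absurd h (group_ne_nil c t')
          subst ht
          simp [insertG]
      | cons q r =>
          obtain ⟨b, e⟩ := q
          rw [h] at ih
          by_cases hab : a = b
          · subst hab
            rw [insertG_cons, if_pos rfl, lettersOf_cons, List.replicate_succ,
              List.cons_append]
            rw [show List.replicate e a ++ lettersOf r = lettersOf ((a, e) :: r) from rfl, ih]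
          · rw [insertG_cons, if_neg hab, lettersOf_cons]
            simp only [List.replicate_one, List.cons_append, List.nil_append]
            rw [ih]

lemma group_exp_ge_one : ∀ (l : List ℕ) (q : ℕ × ℕ), q ∈ group l → 1 ≤ q.2 := by
  intro l
  induction l with
  | nil => intro q hq; simp [group] at hq
  | cons a t ih =>
      intro q hq
      rw [show group (a :: t) = insertG a (group t) from rfl] at hq
      cases h : group t with
      | nil => rw [h] at hq; simp [insertG] at hq; subst hq; simp
      | cons p r =>
          obtain ⟨b, e⟩ := p
          rw [h] at hq
          by_cases hab : a = b
          · rw [insertG_cons, if_pos hab] at hq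
            rcases List.mem_cons.mp hq with rfl | hq
            · simp
            · exact ih q (h ▸ List.mem_cons_of_mem _ hq)
          · rw [insertG_cons, if_neg hab] at hq
            rcases List.mem_cons.mp hq with rfl | hq
            · simp
            · exact ih q (h ▸ hq)

lemma group_head_fst (a : ℕ) (t : List ℕ) : ∃ e r, group (a :: t) = (a, e) :: r := by
  show ∃ e r, insertG a (group t) = (a, e) :: r
  cases h : group t with
  | nil => exact ⟨1, [], rfl⟩
  | cons p r =>
      obtain ⟨b, e⟩ := p
      by_cases hab : a = b
      · subst hab; exact ⟨e + 1, r, by rw [insertG_cons, if_pos rfl]⟩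
      · exact ⟨1, (b, e) :: r, by rw [insertG_cons, if_neg hab]⟩

lemma group_chain : ∀ l : List ℕ, List.Chain' (· ≤ ·) l →
    List.Chain' (· < ·) ((group l).map Prod.fst) := by
  intro l
  induction l with
  | nil => intro _; simp [group, List.Chain']
  | cons a t ih =>
      intro h
      cases t with
      | nil => simp [group, insertG, List.Chain']
      | cons c t' =>
          obtain ⟨hac, hch⟩ := List.isChain_cons_cons.mp h
          obtain ⟨e, r, hg⟩ := group_head_fst c t'
          have hIH := ih hch
          rw [hg] at hIH
          show List.Chain' (· < ·) ((insertG a (group (c :: t'))).map Prod.fst)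
          rw [hg]
          by_cases hax : a = c
          · rw [insertG_cons, if_pos hax]
            simpa using hIH
          · rw [insertG_cons, if_neg hax]
            simp only [List.map_cons]
            refine List.isChain_cons_cons.mpr ⟨lt_of_le_of_ne hac hax, ?_⟩
            simpa [List.Chain'] using hIH

lemma chain_lt_nodup (l : List ℕ) (h : List.Chain' (· < ·) l) : l.Nodup :=
  (List.isChain_iff_pairwise.mp h).imp ne_of_lt

/-! ### counting letters -/

lemma count_replicate' (a b n : ℕ) :
    (List.replicate n b).count a = if b = a then n else 0 := by
  rw [List.count_replicate]
  by_cases h : b = a <;> simp [h]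

lemma expOf_eq_zero {gs : List (ℕ × ℕ)} {a : ℕ} (h : a ∉ gs.map Prod.fst) :
    expOf gs a = 0 := by
  induction gs with
  | nil => rfl
  | cons q t ih =>
      rw [expOf]
      simp only [List.map_cons, List.mem_cons] at h
      push_neg at h
      rw [if_neg (fun h' => h.1 h'.symm), ih h.2]

lemma count_lettersOf_zero {gs : List (ℕ × ℕ)} {a : ℕ} (h : a ∉ gs.map Prod.fst) :
    (lettersOf gs).count a = 0 := by
  induction gs with
  | nil => rfl
  | cons q t ih =>
      simp only [List.map_cons, List.mem_cons] at h
      push_neg at h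
      rw [lettersOf_cons, List.count_append, count_replicate',
        if_neg (fun h' => h.1 h'.symm), ih h.2]

lemma count_lettersOf {gs : List (ℕ × ℕ)} (hnd : (gs.map Prod.fst).Nodup) (a : ℕ) :
    (lettersOf gs).count a = expOf gs a := by
  induction gs with
  | nil => rfl
  | cons q t ih =>
      rw [lettersOf_cons, List.count_append, count_replicate', expOf]
      rw [List.map_cons] at hnd
      obtain ⟨hq, hnd'⟩ := List.nodup_cons.mp hnd
      by_cases h : q.1 = a
      · rw [if_pos h, if_pos h]
        have h2 : a ∉ t.map Prod.fst := by rw [← h]; exact hq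
        rw [count_lettersOf_zero h2, add_zero]
      · rw [if_neg h, if_neg h, zero_add]
        exact ih hnd'

lemma expOf_filter (pb : ℕ → Bool) (gs : List (ℕ × ℕ)) (a : ℕ) :
    expOf (gs.filter (fun q => pb q.1)) a = if pb a then expOf gs a else 0 := by
  induction gs with
  | nil => simp [expOf]
  | cons q t ih =>
      rw [List.filter_cons]
      by_cases hq : pb q.1
      · rw [if_pos (by simpa using hq)]
        rw [expOf, expOf]
        by_cases ha : q.1 = a
        · rw [if_pos ha, if_pos ha, if_pos (ha ▸ hq)]
        · rw [if_neg ha, if_neg ha, ih]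
      · rw [if_neg (by simpa using hq), ih]
        rw [expOf]
        by_cases ha : q.1 = a
        · rw [if_pos ha, if_neg (ha ▸ hq)]
          by_cases hpa : pb a
          · exact absurd (ha ▸ hpa) hq
          · rw [if_neg hpa]
        · rw [if_neg ha]

/-- the letters contributed by the end part. -/
def esL (gs : List (ℕ × ℕ)) (ds : List (ℕ × ℕ)) : List ℕ :=
  ds.flatMap (fun p => List.replicate (expOf gs p.1) p.1 ++ List.replicate (expOf gs p.2) p.2)

@[simp] lemma esL_nil (gs : List (ℕ × ℕ)) : esL gs [] = [] := rfl
@[simp] lemma esL_cons (gs : List (ℕ × ℕ)) (p : ℕ × ℕ) (t : List (ℕ × ℕ)) :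
    esL gs (p :: t) =
      (List.replicate (expOf gs p.1) p.1 ++ List.replicate (expOf gs p.2) p.2) ++ esL gs t := rfl

lemma count_esL (gs : List (ℕ × ℕ)) {ds : List (ℕ × ℕ)} (hnd : (FI ds).Nodup) (a : ℕ) :
    (esL gs ds).count a = if a ∈ FI ds then expOf gs a else 0 := by
  induction ds with
  | nil => simp
  | cons p t ih =>
      rw [FI_cons] at hnd
      obtain ⟨h1, hnd1⟩ := List.nodup_cons.mp hnd
      obtain ⟨h2, hnd2⟩ := List.nodup_cons.mp hnd1
      simp only [List.mem_cons] at h1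
      push_neg at h1
      rw [esL_cons, List.count_append, List.count_append, count_replicate', count_replicate',
        ih hnd2, FI_cons]
      by_cases ha1 : p.1 = a
      · have ha2 : ¬ p.2 = a := fun h => h1.1 (ha1.trans h.symm)
        have ha3 : a ∉ FI t := fun h => h1.2 (ha1 ▸ h)
        have hmem : a ∈ p.1 :: p.2 :: FI t := by rw [ha1]; exact List.mem_cons_self
        rw [if_pos ha1, if_neg ha2, if_neg ha3, if_pos hmem, ha1]
        omega
      · by_cases ha2 : p.2 = a
        · have ha3 : a ∉ FI t := fun h => h2 (ha2 ▸ h)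
          have hmem : a ∈ p.1 :: p.2 :: FI t := by
            rw [ha2]; exact List.mem_cons_of_mem _ (List.mem_cons_self)
          rw [if_neg ha1, if_pos ha2, if_neg ha3, if_pos hmem, ha2]
          omega
        · by_cases ha3 : a ∈ FI t
          · have hmem : a ∈ p.1 :: p.2 :: FI t :=
              List.mem_cons_of_mem _ (List.mem_cons_of_mem _ ha3)
            rw [if_neg ha1, if_neg ha2, if_pos ha3, if_pos hmem]
            omega
          · have hmem : a ∉ p.1 :: p.2 :: FI t := by
              simp only [List.mem_cons]
              push_neg
              exact ⟨fun h => ha1 h.symm, fun h => ha2 h.symm, ha3⟩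
            rw [if_neg ha1, if_neg ha2, if_neg ha3, if_neg hmem]

lemma perm_letters (gs ds : List (ℕ × ℕ)) (hndg : (gs.map Prod.fst).Nodup)
    (hndd : (FI ds).Nodup) :
    (lettersOf (gs.filter (fun q => decide (q.1 ∉ FI ds))) ++ esL gs ds).Perm
      (lettersOf gs) := by
  rw [List.perm_iff_count]
  intro a
  have hndf : ((gs.filter (fun q => decide (q.1 ∉ FI ds))).map Prod.fst).Nodup :=
    ((List.filter_sublist (l := gs)).map Prod.fst).nodup hndg
  rw [List.count_append, count_lettersOf hndf a, count_lettersOf hndg a,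
    expOf_filter (fun i => decide (i ∉ FI ds)) gs a, count_esL gs hndd a]
  by_cases h : a ∈ FI ds <;> simp [h]


end S5

/-- The T-ideal `{[x₁,x₂]}ᵀ` of `k₀⟨X⟩`: the smallest T-space of `k₀⟨X⟩` that is also
a two-sided ideal of `k₀⟨X⟩` and contains `[x₁,x₂]`.  Concretely it is the span of all
substitution instances `[u,v]` (`u,v ∈ k₀⟨X⟩`) together with their products with
elements of `k₀⟨X⟩` on either side. -/
def commTIdeal : Submodule k (F k) := Submodule.span k
  {x | ∃ u ∈ A0 k, ∃ v ∈ A0 k,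
    x = ringComm u v ∨
    (∃ a ∈ A0 k, x = a * ringComm u v) ∨
    (∃ b ∈ A0 k, x = ringComm u v * b) ∨
    (∃ a ∈ A0 k, ∃ b ∈ A0 k, x = a * ringComm u v * b)}

/-- The beginning `∏_{r=1}^{t} x_{i_r}^{α_r}` of an `SS`-element, encoded by the list
`bs = [(i₁,α₁),…,(i_t,α_t)]` of (index, exponent) pairs. -/
def begProd (bs : List (ℕ × ℕ)) : F k := (bs.map (fun q => X k q.1 ^ q.2)).prod

/-- The end `∏_{r=1}^{s} [x_{j_{2r-1}},x_{j_{2r}}]·x_{j_{2r-1}}^{β_{2r-1}}·x_{j_{2r}}^{β_{2r}}`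
of an `SS`-element, encoded by the list of pairs `((j_{2r-1},β_{2r-1}),(j_{2r},β_{2r}))`. -/
def endProd (es : List ((ℕ × ℕ) × (ℕ × ℕ))) : F k :=
  (es.map (fun q =>
    ringComm (X k q.1.1) (X k q.2.1) * X k q.1.1 ^ q.1.2 * X k q.2.1 ^ q.2.2)).prod

/-- The list `j₁, j₂, …, j_{2s}` of variable indices occurring in the end. -/
def endIdx : List ((ℕ × ℕ) × (ℕ × ℕ)) → List ℕ
  | [] => []
  | q :: t => q.1.1 :: q.2.1 :: endIdx t

/-- The side conditions defining membership in the set `SS`: not both parts empty,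
beginning indices `i₁ < ⋯ < i_t` strictly increasing with all exponents `α_r ≥ 1`,
end indices `j₁ < ⋯ < j_{2s}` strictly increasing, and the two index sets disjoint
(all exponents `β_r ≥ 0` is automatic in `ℕ`). -/
def SSElt (bs : List (ℕ × ℕ)) (es : List ((ℕ × ℕ) × (ℕ × ℕ))) : Prop :=
  (bs ≠ [] ∨ es ≠ []) ∧ List.Chain' (· < ·) (bs.map Prod.fst) ∧ (∀ q ∈ bs, 1 ≤ q.2) ∧
    List.Chain' (· < ·) (endIdx es) ∧ ∀ q ∈ bs, q.1 ∉ endIdx es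

namespace S5

/-- the target submodule. -/
def MM : Submodule k (F k) := Submodule.span k
  {u | ∃ bs es, SSElt bs es ∧ es ≠ [] ∧ u = begProd k bs * endProd k es} ⊔ T3 k

variable {k}

lemma X_pow (i a : ℕ) : X k i ^ a = WW k (List.replicate a i) := by
  induction a with
  | zero => simp
  | succ n ih => rw [List.replicate_succ, WW_cons, pow_succ', ih]

lemma begProd_eq (gs : List (ℕ × ℕ)) : begProd k gs = WW k (lettersOf gs) := by
  induction gs with
  | nil => rfl
  | cons q t ih =>
      rw [lettersOf_cons, WW_append, ← ih, ← X_pow]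
      simp [begProd]

def dsOf (es : List ((ℕ × ℕ) × (ℕ × ℕ))) : List (ℕ × ℕ) := es.map (fun q => (q.1.1, q.2.1))

def bLet (es : List ((ℕ × ℕ) × (ℕ × ℕ))) : List ℕ :=
  es.flatMap (fun q => List.replicate q.1.2 q.1.1 ++ List.replicate q.2.2 q.2.1)

lemma endIdx_eq (es : List ((ℕ × ℕ) × (ℕ × ℕ))) : endIdx es = FI (dsOf es) := by
  induction es with
  | nil => rfl
  | cons q t ih => rw [endIdx, ih]; rfl

lemma endProd_cong (es : List ((ℕ × ℕ) × (ℕ × ℕ))) :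
    endProd k es - CP k (dsOf es) * WW k (bLet es) ∈ T3 k := by
  induction es with
  | nil => simp [endProd, dsOf, bLet, CP, WW]
  | cons q t ih =>
      have hq : endProd k (q :: t) =
          (CC k (q.1.1, q.2.1) * (X k q.1.1 ^ q.1.2 * X k q.2.1 ^ q.2.2)) * endProd k t := by
        simp only [endProd, List.map_cons, List.prod_cons, CC]
        noncomm_ring
      have step1 : endProd k (q :: t) -
          (CC k (q.1.1, q.2.1) * (X k q.1.1 ^ q.1.2 * X k q.2.1 ^ q.2.2)) *
            (CP k (dsOf t) * WW k (bLet t)) ∈ T3 k := by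
        rw [hq, ← mul_sub]
        exact T3_mul_left _ ih
      have step2 : (CC k (q.1.1, q.2.1) * (X k q.1.1 ^ q.1.2 * X k q.2.1 ^ q.2.2)) *
            (CP k (dsOf t) * WW k (bLet t)) -
          CC k (q.1.1, q.2.1) * CP k (dsOf t) *
            ((X k q.1.1 ^ q.1.2 * X k q.2.1 ^ q.2.2) * WW k (bLet t)) ∈ T3 k := by
        have heq : (CC k (q.1.1, q.2.1) * (X k q.1.1 ^ q.1.2 * X k q.2.1 ^ q.2.2)) *
              (CP k (dsOf t) * WW k (bLet t)) -
            CC k (q.1.1, q.2.1) * CP k (dsOf t) *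
              ((X k q.1.1 ^ q.1.2 * X k q.2.1 ^ q.2.2) * WW k (bLet t)) =
            CC k (q.1.1, q.2.1) *
              (((X k q.1.1 ^ q.1.2 * X k q.2.1 ^ q.2.2) * CP k (dsOf t) -
                CP k (dsOf t) * (X k q.1.1 ^ q.1.2 * X k q.2.1 ^ q.2.2)) * WW k (bLet t)) := by
          noncomm_ring
        rw [heq]
        exact T3_mul_left _ (T3_mul_right _ (t3_CP_central _ _))
      have step3 : CC k (q.1.1, q.2.1) * CP k (dsOf t) *
            ((X k q.1.1 ^ q.1.2 * X k q.2.1 ^ q.2.2) * WW k (bLet t)) =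
          CP k (dsOf (q :: t)) * WW k (bLet (q :: t)) := by
        have h1 : dsOf (q :: t) = (q.1.1, q.2.1) :: dsOf t := rfl
        have h2 : bLet (q :: t) =
            (List.replicate q.1.2 q.1.1 ++ List.replicate q.2.2 q.2.1) ++ bLet t := rfl
        rw [h1, h2, CP_cons, WW_append, WW_append, X_pow, X_pow]
        try noncomm_ring
      have htot : endProd k (q :: t) - CP k (dsOf (q :: t)) * WW k (bLet (q :: t)) =
          (endProd k (q :: t) -
            (CC k (q.1.1, q.2.1) * (X k q.1.1 ^ q.1.2 * X k q.2.1 ^ q.2.2)) *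
              (CP k (dsOf t) * WW k (bLet t))) +
          ((CC k (q.1.1, q.2.1) * (X k q.1.1 ^ q.1.2 * X k q.2.1 ^ q.2.2)) *
              (CP k (dsOf t) * WW k (bLet t)) -
            CC k (q.1.1, q.2.1) * CP k (dsOf t) *
              ((X k q.1.1 ^ q.1.2 * X k q.2.1 ^ q.2.2) * WW k (bLet t))) := by
        rw [← step3]; abel
      rw [htot]
      exact Submodule.add_mem _ step1 step2

lemma final_good (m : List ℕ) (ds : List (ℕ × ℕ)) (hgood : Good ds)
    (hrec : SM k m.length ≤ MM k) : WW k m * CP k ds ∈ MM k := by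
  obtain ⟨hdne, hch⟩ := hgood
  have hndd : (FI ds).Nodup := chain_lt_nodup _ hch
  have hsort : List.Chain' (· ≤ ·) (List.insertionSort (· ≤ ·) m) :=
    List.isChain_iff_pairwise.mpr (List.pairwise_insertionSort (· ≤ ·) m)
  set sm := List.insertionSort (· ≤ ·) m with hsm
  set gs := group sm with hgs
  have hfst : List.Chain' (· < ·) (gs.map Prod.fst) := group_chain sm hsort
  have hfstnd : (gs.map Prod.fst).Nodup := chain_lt_nodup _ hfst
  set bs := gs.filter (fun q => decide (q.1 ∉ FI ds)) with hbs
  set es := ds.map (fun p => ((p.1, expOf gs p.1), (p.2, expOf gs p.2))) with hes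
  have hdsOf : dsOf es = ds := by
    rw [hes, dsOf, List.map_map]
    rw [show ((fun q : (ℕ × ℕ) × (ℕ × ℕ) => (q.1.1, q.2.1)) ∘
      (fun p : ℕ × ℕ => ((p.1, expOf gs p.1), (p.2, expOf gs p.2)))) = id from
      funext fun p => rfl, List.map_id]
  have hbLet : bLet es = esL gs ds := by
    rw [hes, bLet, List.flatMap_map]
    rfl
  have hendIdx : endIdx es = FI ds := by rw [endIdx_eq, hdsOf]
  have hlperm : (lettersOf bs ++ esL gs ds).Perm m := by
    refine (perm_letters gs ds hfstnd hndd).trans ?_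
    rw [hgs, lettersOf_group sm]
    exact List.perm_insertionSort (· ≤ ·) m
  have hesne : es ≠ [] := by
    rw [hes]
    simpa using hdne
  have hSS : SSElt bs es := by
    refine ⟨Or.inr hesne, ?_, ?_, ?_, ?_⟩
    · exact List.IsChain.sublist hfst ((List.filter_sublist (l := gs)).map Prod.fst)
    · intro q hq
      refine group_exp_ge_one sm q ?_
      have h0 := List.mem_of_mem_filter hq
      rwa [hgs] at h0
    · rw [hendIdx]; exact hch
    · intro q hq
      rw [hendIdx]
      exact of_decide_eq_true (List.mem_filter.mp hq).2
  have hcong : begProd k bs * endProd k es -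
      WW k (lettersOf bs ++ esL gs ds) * CP k ds ∈ T3 k := by
    have h1 : begProd k bs * endProd k es
        - begProd k bs * (CP k ds * WW k (esL gs ds)) ∈ T3 k := by
      rw [← mul_sub]
      refine T3_mul_left _ ?_
      have h0 := endProd_cong (k := k) es
      rwa [hdsOf, hbLet] at h0
    have h2 : begProd k bs * (CP k ds * WW k (esL gs ds))
        - WW k (lettersOf bs ++ esL gs ds) * CP k ds ∈ T3 k := by
      rw [WW_append, begProd_eq]
      have heq : WW k (lettersOf bs) * (CP k ds * WW k (esL gs ds))
          - WW k (lettersOf bs) * WW k (esL gs ds) * CP k ds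
          = WW k (lettersOf bs) *
              -(WW k (esL gs ds) * CP k ds - CP k ds * WW k (esL gs ds)) := by
        noncomm_ring
      rw [heq]
      exact T3_mul_left _ (Submodule.neg_mem _ (t3_CP_central _ _))
    have htot : begProd k bs * endProd k es -
        WW k (lettersOf bs ++ esL gs ds) * CP k ds =
        (begProd k bs * endProd k es - begProd k bs * (CP k ds * WW k (esL gs ds))) +
          (begProd k bs * (CP k ds * WW k (esL gs ds)) -
            WW k (lettersOf bs ++ esL gs ds) * CP k ds) := by abel
    rw [htot]
    exact Submodule.add_mem _ h1 h2
  have hre := reord (k := k) hlperm ds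
  rw [hlperm.length_eq] at hre
  have hSSmem : begProd k bs * endProd k es ∈ MM k :=
    Submodule.mem_sup_left (Submodule.subset_span ⟨bs, es, hSS, hesne, rfl⟩)
  have h1 : WW k (lettersOf bs ++ esL gs ds) * CP k ds ∈ MM k := by
    have heq : WW k (lettersOf bs ++ esL gs ds) * CP k ds =
        begProd k bs * endProd k es - (begProd k bs * endProd k es -
          WW k (lettersOf bs ++ esL gs ds) * CP k ds) := by abel
    rw [heq]
    exact Submodule.sub_mem _ hSSmem (Submodule.mem_sup_right hcong)
  have heq2 : WW k m * CP k ds = WW k (lettersOf bs ++ esL gs ds) * CP k ds -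
      (WW k (lettersOf bs ++ esL gs ds) * CP k ds - WW k m * CP k ds) := by abel
  rw [heq2]
  exact Submodule.sub_mem _ h1 (hrec hre)

lemma main_mem : ∀ (n : ℕ) (m : List ℕ) (cs : List (ℕ × ℕ)), m.length ≤ n → cs ≠ [] →
    WW k m * CP k cs ∈ MM k := by
  intro n
  induction n using Nat.strong_induction_on with
  | _ n IH =>
  intro m cs hlen hne
  have hrec : SM k m.length ≤ MM k := by
    refine sup_le ?_ le_sup_right
    rw [Submodule.span_le]
    rintro x ⟨m', ds', hne', hlt, rfl⟩
    exact IH m'.length (lt_of_lt_of_le hlt hlen) m' ds' le_rfl hne'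
  by_cases hnd : (FI cs).Nodup
  · have hn := norm (k := k) cs.length cs le_rfl hne hnd
    rw [NN] at hn
    obtain ⟨s, hs, t, ht, heq⟩ := Submodule.mem_sup.mp hn
    have hsplit : WW k m * CP k cs = WW k m * s + WW k m * t := by
      rw [← mul_add, heq]
    rw [hsplit]
    refine Submodule.add_mem _ ?_ (Submodule.mem_sup_right (T3_mul_left _ ht))
    refine Submodule.span_induction (p := fun x _ => WW k m * x ∈ MM k) ?_
      (by show WW k m * 0 ∈ _; rw [mul_zero]; exact Submodule.zero_mem _) ?_ ?_ hs
    · rintro x ⟨ds, hgood, hp, rfl⟩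
      exact final_good m ds hgood hrec
    · intro x y _ _ h1 h2; rw [mul_add]; exact Submodule.add_mem _ h1 h2
    · intro c x _ h; rw [mul_smul_comm]; exact Submodule.smul_mem _ _ h
  · exact Submodule.mem_sup_right (T3_mul_left _ (t3_dup cs hnd))


lemma ringComm_smul_left (c : k) (x y : F k) : ringComm (c • x) y = c • ringComm x y := by
  simp [ringComm, smul_sub, smul_mul_assoc, mul_smul_comm]

lemma ringComm_smul_right (c : k) (x y : F k) : ringComm x (c • y) = c • ringComm x y := by
  simp [ringComm, smul_sub, smul_mul_assoc, mul_smul_comm]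

lemma ringComm_zero_left (y : F k) : ringComm 0 y = 0 := by simp [ringComm]

lemma ringComm_zero_right (y : F k) : ringComm y 0 = 0 := by simp [ringComm]

lemma span_WW (f : F k) : f ∈ Submodule.span k (Set.range (WW k)) := by
  induction f using FreeAlgebra.induction with
  | grade0 r =>
      have h : (algebraMap k (F k)) r = r • WW k [] := by
        rw [WW_nil, Algebra.algebraMap_eq_smul_one]
      rw [h]
      exact Submodule.smul_mem _ _ (Submodule.subset_span ⟨[], rfl⟩)
  | grade1 i =>
      refine Submodule.subset_span ⟨[i], ?_⟩
      simp [WW, X]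
  | mul a b ha hb =>
      refine Submodule.span_induction
        (p := fun x _ => x * b ∈ Submodule.span k (Set.range (WW k))) ?_
        (by show (0 : F k) * b ∈ _; rw [zero_mul]; exact Submodule.zero_mem _) ?_ ?_ ha
      · rintro x ⟨l, rfl⟩
        refine Submodule.span_induction
          (p := fun y _ => WW k l * y ∈ Submodule.span k (Set.range (WW k))) ?_
          (by show WW k l * 0 ∈ _; rw [mul_zero]; exact Submodule.zero_mem _) ?_ ?_ hb
        · rintro y ⟨l', rfl⟩
          exact Submodule.subset_span ⟨l ++ l', WW_append l l'⟩
        · intro x y _ _ h1 h2; rw [mul_add]; exact Submodule.add_mem _ h1 h2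
        · intro c x _ h; rw [mul_smul_comm]; exact Submodule.smul_mem _ _ h
      · intro x y _ _ h1 h2; rw [add_mul]; exact Submodule.add_mem _ h1 h2
      · intro c x _ h; rw [smul_mul_assoc]; exact Submodule.smul_mem _ _ h
  | add a b ha hb => exact Submodule.add_mem _ ha hb

lemma L0 (l l' : List ℕ) (i j : ℕ) : WW k l * CC k (i, j) * WW k l' ∈ MM k := by
  have h1 : WW k l * CC k (i, j) * WW k l' - WW k (l ++ l') * CP k [(i, j)] ∈ T3 k := by
    have heq : WW k l * CC k (i, j) * WW k l' - WW k (l ++ l') * CP k [(i, j)] =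
        WW k l * -(WW k l' * CC k (i, j) - CC k (i, j) * WW k l') := by
      rw [WW_append]
      simp only [CP_cons, CP_nil, mul_one]
      noncomm_ring
    rw [heq]
    exact T3_mul_left _ (Submodule.neg_mem _ (t3_central (X k i) (X k j) (WW k l')))
  have h2 : WW k (l ++ l') * CP k [(i, j)] ∈ MM k :=
    main_mem (l ++ l').length (l ++ l') [(i, j)] le_rfl (List.cons_ne_nil _ _)
  have heq2 : WW k l * CC k (i, j) * WW k l' =
      (WW k l * CC k (i, j) * WW k l' - WW k (l ++ l') * CP k [(i, j)]) +
        WW k (l ++ l') * CP k [(i, j)] := by abel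
  rw [heq2]
  exact Submodule.add_mem _ (Submodule.mem_sup_right h1) h2

lemma L1 : ∀ (lv : List ℕ) (i : ℕ) (l l' : List ℕ),
    WW k l * ringComm (X k i) (WW k lv) * WW k l' ∈ MM k := by
  intro lv
  induction lv with
  | nil =>
      intro i l l'
      have h : ringComm (X k i) (WW k []) = 0 := by simp [ringComm]
      rw [h, mul_zero, zero_mul]
      exact Submodule.zero_mem _
  | cons j t ih =>
      intro i l l'
      have hexp : WW k l * ringComm (X k i) (WW k (j :: t)) * WW k l' =
          WW k (l ++ [j]) * ringComm (X k i) (WW k t) * WW k l' +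
            WW k l * CC k (i, j) * WW k (t ++ l') := by
        rw [WW_cons, WW_append, WW_append, WW_cons, WW_nil]
        show WW k l * ringComm (X k i) (X k j * WW k t) * WW k l' =
          WW k l * (X k j * 1) * ringComm (X k i) (WW k t) * WW k l' +
            WW k l * ringComm (X k i) (X k j) * (WW k t * WW k l')
        simp only [ringComm]
        noncomm_ring
      rw [hexp]
      exact Submodule.add_mem _ (ih i (l ++ [j]) l') (L0 l (t ++ l') i j)

lemma L2 : ∀ (lu lv l l' : List ℕ),
    WW k l * ringComm (WW k lu) (WW k lv) * WW k l' ∈ MM k := by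
  intro lu
  induction lu with
  | nil =>
      intro lv l l'
      have h : ringComm (WW k []) (WW k lv) = 0 := by simp [ringComm]
      rw [h, mul_zero, zero_mul]
      exact Submodule.zero_mem _
  | cons i t ih =>
      intro lv l l'
      have hexp : WW k l * ringComm (WW k (i :: t)) (WW k lv) * WW k l' =
          WW k (l ++ [i]) * ringComm (WW k t) (WW k lv) * WW k l' +
            WW k l * ringComm (X k i) (WW k lv) * WW k (t ++ l') := by
        rw [WW_cons, WW_append, WW_append, WW_cons, WW_nil]
        simp only [ringComm]
        noncomm_ring
      rw [hexp]
      exact Submodule.add_mem _ (ih lv (l ++ [i]) l') (L1 lv i l (t ++ l'))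

lemma L3 (c u v d : F k) : c * ringComm u v * d ∈ MM k := by
  have key1 : ∀ (lc lu lv : List ℕ) (d : F k),
      WW k lc * ringComm (WW k lu) (WW k lv) * d ∈ MM k := by
    intro lc lu lv d
    refine Submodule.span_induction
      (p := fun d _ => WW k lc * ringComm (WW k lu) (WW k lv) * d ∈ MM k) ?_
      (by show WW k lc * ringComm (WW k lu) (WW k lv) * 0 ∈ MM k
          rw [mul_zero]; exact Submodule.zero_mem _) ?_ ?_ (span_WW d)
    · rintro x ⟨ld, rfl⟩; exact L2 lu lv lc ld
    · intro x y _ _ h1 h2; rw [mul_add]; exact Submodule.add_mem _ h1 h2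
    · intro a x _ h; rw [mul_smul_comm]; exact Submodule.smul_mem _ _ h
  have key2 : ∀ (lc lu : List ℕ) (v d : F k),
      WW k lc * ringComm (WW k lu) v * d ∈ MM k := by
    intro lc lu v d
    refine Submodule.span_induction
      (p := fun v _ => WW k lc * ringComm (WW k lu) v * d ∈ MM k) ?_ ?_ ?_ ?_ (span_WW v)
    · rintro x ⟨lv, rfl⟩; exact key1 lc lu lv d
    · show WW k lc * ringComm (WW k lu) 0 * d ∈ MM k
      rw [ringComm_zero_right, mul_zero, zero_mul]; exact Submodule.zero_mem _
    · intro x y _ _ h1 h2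
      rw [ringComm_add_right, mul_add, add_mul]
      exact Submodule.add_mem _ h1 h2
    · intro a x _ h
      rw [ringComm_smul_right, mul_smul_comm, smul_mul_assoc]
      exact Submodule.smul_mem _ _ h
  have key3 : ∀ (lc : List ℕ) (u v d : F k),
      WW k lc * ringComm u v * d ∈ MM k := by
    intro lc u v d
    refine Submodule.span_induction
      (p := fun u _ => WW k lc * ringComm u v * d ∈ MM k) ?_ ?_ ?_ ?_ (span_WW u)
    · rintro x ⟨lu, rfl⟩; exact key2 lc lu v d
    · show WW k lc * ringComm 0 v * d ∈ MM k
      rw [ringComm_zero_left, mul_zero, zero_mul]; exact Submodule.zero_mem _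
    · intro x y _ _ h1 h2
      rw [ringComm_add_left, mul_add, add_mul]
      exact Submodule.add_mem _ h1 h2
    · intro a x _ h
      rw [ringComm_smul_left, mul_smul_comm, smul_mul_assoc]
      exact Submodule.smul_mem _ _ h
  refine Submodule.span_induction
    (p := fun c _ => c * ringComm u v * d ∈ MM k) ?_ ?_ ?_ ?_ (span_WW c)
  · rintro x ⟨lc, rfl⟩; exact key3 lc u v d
  · show (0 : F k) * ringComm u v * d ∈ MM k
    rw [zero_mul, zero_mul]; exact Submodule.zero_mem _
  · intro x y _ _ h1 h2
    rw [add_mul, add_mul]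
    exact Submodule.add_mem _ h1 h2
  · intro a x _ h
    rw [smul_mul_assoc, smul_mul_assoc]
    exact Submodule.smul_mem _ _ h

end S5

/-- Every element of the T-ideal `{[x₁,x₂]}ᵀ` of `k₀⟨X⟩` is congruent modulo `T⁽³⁾` to
a linear combination of elements `w·∏_{r=1}^{s}[x_{j_{2r−1}},x_{j_{2r}}]·x_{j_{2r−1}}^{β_{2r−1}}·x_{j_{2r}}^{β_{2r}}`
with `s ≥ 1`, `j₁ < ⋯ < j_{2s}`, all `βᵢ ≥ 0`, and `w` either empty or
`w = ∏_{r=1}^{m} x_{i_r}^{α_r}` with `i₁ < ⋯ < i_m`, all `α_r > 0` and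
`{i₁,…,i_m} ∩ {j₁,…,j_{2s}} = ∅`. -/
theorem statement5 (p : ℕ) (hp : ringChar k = p) (hp2 : p ≠ 2) :
    ∀ f ∈ commTIdeal k,
      f ∈ Submodule.span k
            {u | ∃ bs es, SSElt bs es ∧ es ≠ [] ∧ u = begProd k bs * endProd k es} ⊔
          T3 k := by
  intro f hf
  show f ∈ S5.MM k
  refine Submodule.span_induction (p := fun x _ => x ∈ S5.MM k) ?_ (Submodule.zero_mem _)
    (fun x y _ _ hx hy => Submodule.add_mem _ hx hy)
    (fun c x _ hx => Submodule.smul_mem _ _ hx) hf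
  rintro x ⟨u, hu, v, hv, h | ⟨a, ha, h⟩ | ⟨b, hb, h⟩ | ⟨a, ha, b, hb, h⟩⟩ <;> subst h
  · have h := S5.L3 1 u v 1
    rwa [one_mul, mul_one] at h
  · have h := S5.L3 a u v 1
    rwa [mul_one] at h
  · have h := S5.L3 1 u v b
    rwa [one_mul] at h
  · exact S5.L3 a u v b

end
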